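/- Let α ∈ (3/2,2) and x_i ∈ (0,1). The function φ_i(x) = (x_i−x)^{α−1}χ_{[0,x_i]}(x) − x_i^{α−1}(1−x)^{α−1} satisfies φ_i(0) = 0, φ_i(1) = 0, and ᴿD₁^{α−1}φ_i(x) = Γ(α)(χ_{[0,x_i]}(x) − x_i^{α−1}) for a.e. x ∈ (0,1); in particular ᴿD₁^{α−1}φ_i is piecewise constant. -/

import Mathlib

open MeasureTheory Set

/-- Right-sided Riemann-Liouville fractional integral of order `γ`. -/
noncomputable def rightFracInt (γ : ℝ) (f : ℝ → ℝ) (x : ℝ) : ℝ :=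
  (1 / Real.Gamma γ) * ∫ t in x..(1:ℝ), (t - x) ^ (γ - 1) * f t

/-- Right-sided Riemann-Liouville derivative of order `β ∈ (0,1)`. -/
noncomputable def rightRLDeriv (β : ℝ) (u : ℝ → ℝ) (x : ℝ) : ℝ :=
  - deriv (rightFracInt (1 - β) u) x

lemma realBeta_aux (α : ℝ) (h1 : 1 < α) (h2 : α < 2) :
    ∫ s in (0:ℝ)..1, s ^ (1-α) * (1-s) ^ (α-1) = Real.Gamma (2-α) * Real.Gamma α := by
  have ha : (0:ℝ) < 2 - α := by linarith
  have hb : (0:ℝ) < α := by linarith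
  have key := Complex.Gamma_mul_Gamma_eq_betaIntegral
    (s := ((2-α : ℝ) : ℂ)) (t := ((α : ℝ) : ℂ)) (by simpa using ha) (by simpa using hb)
  have hsum : ((2-α : ℝ) : ℂ) + ((α : ℝ) : ℂ) = (((2:ℝ) : ℝ) : ℂ) := by push_cast; ring
  rw [hsum, Complex.Gamma_ofReal, Complex.Gamma_ofReal, Complex.Gamma_ofReal,
    Real.Gamma_two] at key
  have hβ : Complex.betaIntegral ((2-α:ℝ):ℂ) ((α:ℝ):ℂ)
      = ((∫ s in (0:ℝ)..1, s ^ (1-α) * (1-s) ^ (α-1) : ℝ) : ℂ) := by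
    rw [Complex.betaIntegral, ← intervalIntegral.integral_ofReal]
    apply intervalIntegral.integral_congr
    intro t ht
    rw [uIcc_of_le (by norm_num : (0:ℝ) ≤ 1)] at ht
    have h0 : (0:ℝ) ≤ t := ht.1
    have h1' : (0:ℝ) ≤ 1 - t := by linarith [ht.2]
    show (t:ℂ) ^ (((2-α:ℝ):ℂ) - 1) * (1 - (t:ℂ)) ^ (((α:ℝ):ℂ) - 1)
        = ((t ^ (1-α) * (1-t) ^ (α-1) : ℝ) : ℂ)
    rw [Complex.ofReal_mul, Complex.ofReal_cpow h0, Complex.ofReal_cpow h1']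
    congr 2 <;> push_cast <;> ring
  rw [hβ, Complex.ofReal_one, one_mul, ← Complex.ofReal_mul] at key
  exact_mod_cast key.symm

lemma betaConv_aux (α x y : ℝ) (h1 : 1 < α) (h2 : α < 2) (hxy : x < y) :
    ∫ t in x..y, (t-x) ^ (1-α) * (y-t) ^ (α-1)
      = Real.Gamma (2-α) * Real.Gamma α * (y-x) := by
  have hc : (0:ℝ) < y - x := sub_pos.mpr hxy
  have h := intervalIntegral.integral_comp_mul_add (a := (0:ℝ)) (b := 1)
    (fun t => (t-x) ^ (1-α) * (y-t) ^ (α-1)) hc.ne' x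
  rw [show (y-x)*0+x = x from by ring, show (y-x)*1+x = y from by ring, smul_eq_mul] at h
  have h2' : (∫ s in (0:ℝ)..1, ((y-x)*s + x - x) ^ (1-α) * (y - ((y-x)*s + x)) ^ (α-1))
      = ∫ s in (0:ℝ)..1, s ^ (1-α) * (1-s) ^ (α-1) := by
    apply intervalIntegral.integral_congr
    intro s hs
    rw [uIcc_of_le (by norm_num : (0:ℝ) ≤ 1)] at hs
    have e1 : (y-x)*s + x - x = (y-x)*s := by ring
    have e2 : y - ((y-x)*s + x) = (y-x)*(1-s) := by ring
    dsimp only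
    rw [e1, e2, Real.mul_rpow hc.le hs.1, Real.mul_rpow hc.le (by linarith [hs.2]),
      show (y-x) ^ (1-α) * s ^ (1-α) * ((y-x) ^ (α-1) * (1-s) ^ (α-1))
        = ((y-x) ^ (1-α) * (y-x) ^ (α-1)) * (s ^ (1-α) * (1-s) ^ (α-1)) from by ring,
      ← Real.rpow_add hc, show (1-α)+(α-1) = (0:ℝ) from by ring, Real.rpow_zero, one_mul]
  rw [h2', realBeta_aux α h1 h2] at h
  have h3 : (y - x) * (Real.Gamma (2-α) * Real.Gamma α)
      = ∫ t in x..y, (t-x) ^ (1-α) * (y-t) ^ (α-1) := by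
    rw [h]; field_simp
  rw [← h3]; ring

lemma base_int (α x a b : ℝ) (h : α < 2) :
    IntervalIntegrable (fun t => (t-x) ^ (1-α)) volume a b := by
  have := (intervalIntegral.intervalIntegrable_rpow' (r := 1-α) (by linarith)
    (a := a - x) (b := b - x)).comp_sub_right x
  simpa using this

/-- For `α ∈ (3/2,2)` and `x_i ∈ (0,1)`, the test basis function
`φ_i(x) = (x_i-x)^{α-1}χ_{[0,x_i]}(x) - x_i^{α-1}(1-x)^{α-1}` vanishes at `0` and `1`,
and `ᴿD₁^{α-1}φ_i = Γ(α)(χ_{[0,x_i]} - x_i^{α-1})` a.e. on `(0,1)`, a piecewise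
constant function. -/
theorem testBasis_RL (α : ℝ) (hα : α ∈ Set.Ioo (3/2 : ℝ) 2)
    (xi : ℝ) (hxi : xi ∈ Set.Ioo (0:ℝ) 1)
    (φ : ℝ → ℝ)
    (hφ : ∀ x, φ x = (if x ≤ xi then (xi - x) ^ (α - 1) else 0)
        - xi ^ (α - 1) * (1 - x) ^ (α - 1)) :
    φ 0 = 0 ∧ φ 1 = 0 ∧
    ∀ᵐ x ∂(volume.restrict (Set.Ioo (0:ℝ) 1)),
      rightRLDeriv (α - 1) φ x
        = Real.Gamma α * ((if x ≤ xi then 1 else 0) - xi ^ (α - 1)) := by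
  obtain ⟨hα1, hα2⟩ := hα
  obtain ⟨hx0, hx1⟩ := hxi
  have hα1' : (1:ℝ) < α := by linarith
  have hαm : (0:ℝ) < α - 1 := by linarith
  have hΓ : Real.Gamma (2-α) ≠ 0 := (Real.Gamma_pos_of_pos (by linarith)).ne'
  have hcont1 : Continuous (fun t : ℝ => (xi - t) ^ (α-1)) := by
    apply Continuous.rpow_const (by continuity)
    intro t; right; linarith
  have hcont2 : Continuous (fun t : ℝ => (1 - t) ^ (α-1)) := by
    apply Continuous.rpow_const (by continuity)
    intro t; right; linarith
  -- closed form of the fractional integral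
  have key : ∀ y ∈ Ioo (0:ℝ) 1, y ≠ xi → rightFracInt (2-α) φ y
      = Real.Gamma α * ((if y ≤ xi then xi - y else 0) - xi ^ (α-1) * (1-y)) := by
    intro y hy hny
    have hf2 : IntervalIntegrable (fun t => (t-y) ^ (1-α) * (1-t) ^ (α-1)) volume y 1 :=
      (base_int α y y 1 hα2).mul_continuousOn hcont2.continuousOn
    have hf1 : IntervalIntegrable
        (fun t => (t-y) ^ (1-α) * (if t ≤ xi then (xi-t) ^ (α-1) else 0)) volume y 1 := by
      rcases lt_or_gt_of_ne hny with hlt | hlt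
      · have i1 : IntervalIntegrable
            (fun t => (t-y) ^ (1-α) * (if t ≤ xi then (xi-t) ^ (α-1) else 0)) volume y xi := by
          refine ((base_int α y y xi hα2).mul_continuousOn hcont1.continuousOn).congr ?_
          intro t ht
          rw [uIoc_of_le hlt.le] at ht
          simp only [if_pos ht.2]
        have i2 : IntervalIntegrable
            (fun t => (t-y) ^ (1-α) * (if t ≤ xi then (xi-t) ^ (α-1) else 0)) volume xi 1 := by
          refine (intervalIntegrable_const (c := (0:ℝ))).congr ?_
          intro t ht
          rw [uIoc_of_le hx1.le] at ht
          simp only [if_neg (not_le.mpr ht.1), mul_zero]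
        exact i1.trans i2
      · refine (intervalIntegrable_const (c := (0:ℝ))).congr ?_
        intro t ht
        rw [uIoc_of_le hy.2.le] at ht
        simp only [if_neg (not_le.mpr (hlt.trans ht.1)), mul_zero]
    have hsplit : (∫ t in y..(1:ℝ), (t - y) ^ ((2-α) - 1) * φ t)
        = (∫ t in y..(1:ℝ), (t-y) ^ (1-α) * (if t ≤ xi then (xi-t) ^ (α-1) else 0))
          - xi ^ (α-1) * ∫ t in y..(1:ℝ), (t-y) ^ (1-α) * (1-t) ^ (α-1) := by
      rw [show (∫ t in y..(1:ℝ), (t - y) ^ ((2-α) - 1) * φ t)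
          = ∫ t in y..(1:ℝ), ((t-y) ^ (1-α) * (if t ≤ xi then (xi-t) ^ (α-1) else 0)
            - xi ^ (α-1) * ((t-y) ^ (1-α) * (1-t) ^ (α-1))) from
        intervalIntegral.integral_congr fun t _ => by
          rw [show (2:ℝ)-α-1 = 1-α from by ring, hφ t]; ring]
      rw [intervalIntegral.integral_sub hf1 (hf2.const_mul _),
        intervalIntegral.integral_const_mul]
    have hB : (∫ t in y..(1:ℝ), (t-y) ^ (1-α) * (1-t) ^ (α-1))
        = Real.Gamma (2-α) * Real.Gamma α * (1-y) := betaConv_aux α y 1 hα1' hα2 hy.2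
    have hA : (∫ t in y..(1:ℝ), (t-y) ^ (1-α) * (if t ≤ xi then (xi-t) ^ (α-1) else 0))
        = Real.Gamma (2-α) * Real.Gamma α * (if y ≤ xi then xi - y else 0) := by
      rcases lt_or_gt_of_ne hny with hlt | hlt
      · rw [if_pos hlt.le]
        rw [← intervalIntegral.integral_add_adjacent_intervals (b := xi)
          (by
            refine ((base_int α y y xi hα2).mul_continuousOn hcont1.continuousOn).congr ?_
            intro t ht
            rw [uIoc_of_le hlt.le] at ht
            simp only [if_pos ht.2])
          (by
            refine (intervalIntegrable_const (c := (0:ℝ))).congr ?_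
            intro t ht
            rw [uIoc_of_le hx1.le] at ht
            simp only [if_neg (not_le.mpr ht.1), mul_zero])]
        have e1 : (∫ t in y..xi, (t-y) ^ (1-α) * (if t ≤ xi then (xi-t) ^ (α-1) else 0))
            = ∫ t in y..xi, (t-y) ^ (1-α) * (xi-t) ^ (α-1) := by
          apply intervalIntegral.integral_congr
          intro t ht
          rw [uIcc_of_le hlt.le] at ht
          simp only [if_pos ht.2]
        have e2 : (∫ t in xi..(1:ℝ), (t-y) ^ (1-α) * (if t ≤ xi then (xi-t) ^ (α-1) else 0))
            = 0 := by
          have e2' : (∫ t in xi..(1:ℝ), (t-y) ^ (1-α) * (if t ≤ xi then (xi-t) ^ (α-1) else 0))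
              = ∫ _t in xi..(1:ℝ), (0:ℝ) := by
            apply intervalIntegral.integral_congr_ae
            filter_upwards with t ht
            rw [uIoc_of_le hx1.le] at ht
            simp only [if_neg (not_le.mpr ht.1), mul_zero]
          simpa using e2'
        rw [e1, e2, betaConv_aux α y xi hα1' hα2 hlt, add_zero]
      · rw [if_neg (not_le.mpr hlt), mul_zero]
        have e2' : (∫ t in y..(1:ℝ), (t-y) ^ (1-α) * (if t ≤ xi then (xi-t) ^ (α-1) else 0))
            = ∫ _t in y..(1:ℝ), (0:ℝ) := by
          apply intervalIntegral.integral_congr_ae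
          filter_upwards with t ht
          rw [uIoc_of_le hy.2.le] at ht
          simp only [if_neg (not_le.mpr (hlt.trans ht.1)), mul_zero]
        simpa using e2'
    show (1 / Real.Gamma (2-α)) * _ = _
    rw [hsplit, hA, hB]
    rcases le_or_gt y xi with h | h
    · simp only [if_pos h]; field_simp
    · simp only [if_neg (not_le.mpr h)]; field_simp
  refine ⟨?_, ?_, ?_⟩
  · rw [hφ 0, if_pos hx0.le]
    simp
  · rw [hφ 1, if_neg (not_le.mpr hx1)]
    norm_num [Real.zero_rpow hαm.ne']
  · have hmem : ∀ᵐ x ∂(volume.restrict (Ioo (0:ℝ) 1)), x ∈ Ioo (0:ℝ) 1 :=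
      ae_restrict_mem measurableSet_Ioo
    have hne : ∀ᵐ x ∂(volume.restrict (Ioo (0:ℝ) 1)), x ≠ xi := by
      exact ae_restrict_of_ae (by simp [ae_iff])
    filter_upwards [hmem, hne] with x hx hnex
    have h21 : (1:ℝ) - (α - 1) = 2 - α := by ring
    show - deriv (rightFracInt (1 - (α-1)) φ) x = _
    rw [h21]
    have hev : rightFracInt (2-α) φ =ᶠ[nhds x]
        (fun y => Real.Gamma α * ((if y ≤ xi then xi - y else 0) - xi ^ (α-1) * (1-y))) := by
      have hUopen : IsOpen (Ioo (0:ℝ) 1 ∩ {xi}ᶜ) :=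
        isOpen_Ioo.inter isOpen_compl_singleton
      filter_upwards [hUopen.mem_nhds ⟨hx, hnex⟩] with y hy using key y hy.1 hy.2
    rw [hev.deriv_eq]
    rcases hnex.lt_or_gt with hlt | hlt
    · have hev2 : (fun y => Real.Gamma α * ((if y ≤ xi then xi - y else 0) - xi ^ (α-1) * (1-y)))
          =ᶠ[nhds x] (fun y => Real.Gamma α * ((xi - y) - xi ^ (α-1) * (1-y))) := by
        filter_upwards [Iio_mem_nhds hlt] with y hy
        rw [if_pos (le_of_lt hy)]
      rw [hev2.deriv_eq]
      have d1 : HasDerivAt (fun y : ℝ => xi - y) (-1) x := (hasDerivAt_id x).const_sub xi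
      have d2 : HasDerivAt (fun y : ℝ => 1 - y) (-1) x := (hasDerivAt_id x).const_sub 1
      have hd : HasDerivAt (fun y => Real.Gamma α * ((xi - y) - xi ^ (α-1) * (1-y))) _ x := ((d1.sub (d2.const_mul (xi ^ (α-1)))).const_mul (Real.Gamma α))
      rw [hd.deriv, if_pos hlt.le]
      ring
    · have hev2 : (fun y => Real.Gamma α * ((if y ≤ xi then xi - y else 0) - xi ^ (α-1) * (1-y)))
          =ᶠ[nhds x] (fun y => Real.Gamma α * ((0:ℝ) - xi ^ (α-1) * (1-y))) := by
        filter_upwards [Ioi_mem_nhds hlt] with y hy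
        rw [if_neg (not_le.mpr hy)]
      rw [hev2.deriv_eq]
      have d2 : HasDerivAt (fun y : ℝ => 1 - y) (-1) x := (hasDerivAt_id x).const_sub 1
      have hd : HasDerivAt (fun y => Real.Gamma α * ((0:ℝ) - xi ^ (α-1) * (1-y))) _ x := (((hasDerivAt_const x (0:ℝ)).sub (d2.const_mul (xi ^ (α-1)))).const_mul (Real.Gamma α))
      rw [hd.deriv, if_neg (not_le.mpr hlt)]
      ring
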